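/- Let G₁ and G₂ be Lie groups, Λ: G₁ → G₂ a smooth group homomorphism, and let λ: T_1G₁ → T_1G₂ be the differential of Λ at the identity. For every smooth curve ξ: ℝ → T_1G₁ with development g: ℝ → G₁, the curve Λ ∘ g: ℝ → G₂ is the development of λ ∘ ξ; that is, ∫₀ᵗ(λ ∘ ξ) = Λ(∫₀ᵗξ) for all t ∈ ℝ. -/

import Mathlib

open scoped Manifold

/-- The logarithmic derivative of a smooth curve `g : ℝ → G` in a Lie group, evaluated on the
standard unit tangent vector `∂/∂t`. -/
noncomputable def curveLogDeriv
    {E : Type*} [NormedAddCommGroup E] [NormedSpace ℝ E]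
    {H : Type*} [TopologicalSpace H] (I : ModelWithCorners ℝ E H)
    {G : Type*} [TopologicalSpace G] [ChartedSpace H G] [Group G] [LieGroup I (⊤ : ℕ∞) G]
    (g : ℝ → G) (t : ℝ) : TangentSpace I (1 : G) :=
  mfderiv I I (fun h : G => h * (g t)⁻¹) (g t) (mfderiv 𝓘(ℝ, ℝ) I g t (1 : ℝ))

/-- `g : ℝ → G` is the development of the curve `ξ : ℝ → T₁G`: it is smooth, starts at the
identity, and has logarithmic derivative `ξ`. One writes `∫₀ᵗ ξ := g t`. -/
def IsDevelopment
    {E : Type*} [NormedAddCommGroup E] [NormedSpace ℝ E]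
    {H : Type*} [TopologicalSpace H] (I : ModelWithCorners ℝ E H)
    {G : Type*} [TopologicalSpace G] [ChartedSpace H G] [Group G] [LieGroup I (⊤ : ℕ∞) G]
    (ξ : ℝ → TangentSpace I (1 : G)) (g : ℝ → G) : Prop :=
  ContMDiff 𝓘(ℝ, ℝ) I (⊤ : ℕ∞) g ∧ g 0 = 1 ∧ ∀ t : ℝ, curveLogDeriv I g t = ξ t


section AuxLemmas

variable {E : Type*} [NormedAddCommGroup E] [NormedSpace ℝ E]
  {H : Type*} [TopologicalSpace H] {I : ModelWithCorners ℝ E H}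
  {G : Type*} [TopologicalSpace G] [ChartedSpace H G] [Group G] [LieGroup I (⊤ : ℕ∞) G]

/-- A smooth curve in a manifold with vanishing derivative is constant. -/
theorem constant_of_mfderiv_zero {m : ℝ → G} (hm : ContMDiff 𝓘(ℝ, ℝ) I (⊤ : ℕ∞) m)
    (h0 : ∀ t, mfderiv 𝓘(ℝ, ℝ) I m t = 0) (s t : ℝ) : m s = m t := by
  have hloc : IsLocallyConstant m := by
    rw [IsLocallyConstant.iff_eventually_eq]
    intro t₀
    set x₀ := m t₀ with hx₀
    have hU : IsOpen (m ⁻¹' (chartAt H x₀).source) :=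
      (chartAt H x₀).open_source.preimage hm.continuous
    have ht₀U : t₀ ∈ m ⁻¹' (chartAt H x₀).source := by
      exact mem_chart_source H x₀
    obtain ⟨ε, hε, hball⟩ := Metric.isOpen_iff.1 hU t₀ ht₀U
    set u : ℝ → E := ⇑(extChartAt I x₀) ∘ m with hu_def
    have hu : ∀ s ∈ Metric.ball t₀ ε, HasFDerivAt u (0 : ℝ →L[ℝ] E) s := by
      intro s hs
      have hms : m s ∈ (chartAt H x₀).source := hball hs
      have h1 := hasMFDerivAt_extChartAt (I := I) hms
      have h2 : HasMFDerivAt 𝓘(ℝ, ℝ) I m s 0 := by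
        have := (hm.mdifferentiableAt (by simp) (x := s)).hasMFDerivAt
        rwa [h0 s] at this
      have h3 := h1.comp s h2
      erw [ContinuousLinearMap.comp_zero] at h3
      exact hasMFDerivAt_iff_hasFDerivAt.1 h3
    have hconst : ∀ s ∈ Metric.ball t₀ ε, u s = u t₀ := by
      intro s hs
      refine (convex_ball t₀ ε).is_const_of_fderivWithin_eq_zero
        (fun z hz => (hu z hz).differentiableAt.differentiableWithinAt)
        (fun z hz => ?_) hs (Metric.mem_ball_self hε)
      rw [fderivWithin_of_isOpen Metric.isOpen_ball hz]
      exact (hu z hz).fderiv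
    filter_upwards [Metric.ball_mem_nhds t₀ hε] with s hs
    have hms : m s ∈ (extChartAt I x₀).source := by
      rw [extChartAt_source]; exact hball hs
    have hmt : m t₀ ∈ (extChartAt I x₀).source := by
      rw [extChartAt_source]; exact mem_chart_source H x₀
    calc m s = (extChartAt I x₀).symm (u s) := ((extChartAt I x₀).left_inv hms).symm
      _ = (extChartAt I x₀).symm (u t₀) := by rw [hconst s hs]
      _ = m t₀ := (extChartAt I x₀).left_inv hmt
  exact hloc.apply_eq_of_preconnectedSpace s t

/-- Cancelling right translations on tangent vectors. -/
theorem mfderiv_mul_right_mul_right_inv (a : G) (v : TangentSpace I a) :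
    mfderiv I I (· * a) 1 (mfderiv I I (· * a⁻¹) a v) = v := by
  have hcomp := mfderiv_comp_apply_of_eq (I := I) (I' := I) (I'' := I) (x := a)
    (mdifferentiableAt_mul_right (a := a)) (mdifferentiableAt_mul_right (a := a⁻¹))
    (mul_inv_cancel a) v
  have hfun : ((· * a) ∘ (· * a⁻¹)) = @id G := funext fun z => inv_mul_cancel_right z a
  rw [hfun, mfderiv_id] at hcomp
  simp only [ContinuousLinearMap.id_apply] at hcomp
  exact hcomp.symm

/-- The differential of inversion at the identity is `-id`. -/
theorem mfderiv_inv_one_apply (v : TangentSpace I (1 : G)) :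
    mfderiv I I (fun z : G => z⁻¹) 1 v = -v := by
  have hinv : MDifferentiableAt I I (fun z : G => z⁻¹) (1 : G) :=
    (contMDiff_inv I (⊤ : ℕ∞)).mdifferentiable (by simp) 1
  have hmul : MDifferentiableAt (I.prod I) I (fun p : G × G => p.1 * p.2) ((1 : G), (1 : G)) :=
    (contMDiff_mul I (⊤ : ℕ∞)).mdifferentiable (by simp) _
  have hQ : MDifferentiableAt I (I.prod I) (fun z : G => (z, z⁻¹)) 1 :=
    mdifferentiableAt_id.prodMk hinv
  have hψ : (fun z : G => z * z⁻¹) = fun _ => (1 : G) := funext fun z => mul_inv_cancel z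
  have h0 : mfderiv I I (fun z : G => z * z⁻¹) 1 v = 0 := by
    rw [hψ, mfderiv_const]; rfl
  have hcomp := mfderiv_comp_apply_of_eq (I := I) (I' := I.prod I) (I'' := I) (x := (1 : G))
    hmul hQ (by simp) v
  have hQd : mfderiv I (I.prod I) (fun z : G => (z, z⁻¹)) 1 v =
      (v, mfderiv I I (fun z : G => z⁻¹) 1 v) := by
    have h' : mfderiv I (I.prod I) (fun z : G => (z, z⁻¹)) 1 =
        (mfderiv I I (@id G) 1).prod (mfderiv I I (fun z : G => z⁻¹) 1) :=
      mdifferentiableAt_id.mfderiv_prod hinv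
    rw [h', mfderiv_id]
    rfl
  have hadd := mfderiv_prod_eq_add_apply (I := I) (I' := I) (I'' := I)
    (p := ((1 : G), (1 : G))) (v := (v, mfderiv I I (fun z : G => z⁻¹) 1 v)) hmul
  have hl : (fun z : G => z * (1 : G)) = @id G := funext fun z => mul_one z
  have hr : (fun z : G => (1 : G) * z) = @id G := funext fun z => one_mul z
  rw [hl, hr, mfderiv_id] at hadd
  have key : (show E from v) + (show E from mfderiv I I (fun z : G => z⁻¹) 1 v) = 0 := by
    have h0' : mfderiv I I ((fun p : G × G => p.1 * p.2) ∘ (fun z : G => (z, z⁻¹))) 1 v = 0 := h0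
    rw [hcomp, hQd] at h0'
    exact hadd.symm.trans h0'
  exact eq_neg_of_add_eq_zero_right key

theorem curveLogDeriv_spec (g : ℝ → G) (t : ℝ) :
    mfderiv 𝓘(ℝ, ℝ) I g t (1 : ℝ) = mfderiv I I (· * g t) 1 (curveLogDeriv I g t) :=
  (mfderiv_mul_right_mul_right_inv (g t) _).symm

/-- If two smooth curves have the same "right logarithmic derivative data", the derivative of
`s ↦ (h s)⁻¹ * k s` vanishes. -/
theorem mfderiv_inv_mul_eq_zero {η : ℝ → TangentSpace I (1 : G)} {h k : ℝ → G}
    (hhs : ContMDiff 𝓘(ℝ, ℝ) I (⊤ : ℕ∞) h) (hks : ContMDiff 𝓘(ℝ, ℝ) I (⊤ : ℕ∞) k)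
    (hh : ∀ t, mfderiv 𝓘(ℝ, ℝ) I h t (1 : ℝ) = mfderiv I I (· * h t) 1 (η t))
    (hk : ∀ t, mfderiv 𝓘(ℝ, ℝ) I k t (1 : ℝ) = mfderiv I I (· * k t) 1 (η t))
    (t : ℝ) : mfderiv 𝓘(ℝ, ℝ) I (fun s => (h s)⁻¹ * k s) t = 0 := by
  have hha : MDifferentiableAt 𝓘(ℝ, ℝ) I h t := hhs.mdifferentiableAt (by simp)
  have hka : MDifferentiableAt 𝓘(ℝ, ℝ) I k t := hks.mdifferentiableAt (by simp)
  have hP : MDifferentiableAt 𝓘(ℝ, ℝ) (I.prod I) (fun s => (h s, k s)) t :=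
    hha.prodMk hka
  have hF : MDifferentiableAt (I.prod I) I (fun p : G × G => p.1⁻¹ * p.2) (h t, k t) :=
    (contMDiff_fst.inv.mul contMDiff_snd).mdifferentiableAt (WithTop.coe_ne_zero.mpr ENat.top_ne_zero)
  apply ContinuousLinearMap.ext_ring
  show mfderiv 𝓘(ℝ, ℝ) I (fun s => (h s)⁻¹ * k s) t (1 : ℝ) = 0
  have hstep1 : mfderiv 𝓘(ℝ, ℝ) I (fun s => (h s)⁻¹ * k s) t (1 : ℝ)
      = mfderiv (I.prod I) I (fun p : G × G => p.1⁻¹ * p.2) (h t, k t)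
          (mfderiv 𝓘(ℝ, ℝ) (I.prod I) (fun s => (h s, k s)) t (1 : ℝ)) := by
    rw [show (fun s => (h s)⁻¹ * k s)
        = (fun p : G × G => p.1⁻¹ * p.2) ∘ (fun s => (h s, k s)) from rfl]
    exact mfderiv_comp_apply t hF hP (1 : ℝ)
  have hstep2 : mfderiv 𝓘(ℝ, ℝ) (I.prod I) (fun s => (h s, k s)) t (1 : ℝ)
      = (mfderiv 𝓘(ℝ, ℝ) I h t (1 : ℝ), mfderiv 𝓘(ℝ, ℝ) I k t (1 : ℝ)) := by
    rw [hha.mfderiv_prod hka]; rfl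
  have hstep3 := mfderiv_prod_eq_add_apply (I := I) (I' := I) (I'' := I)
    (p := ((h t), (k t)))
    (v := (mfderiv 𝓘(ℝ, ℝ) I h t (1 : ℝ), mfderiv 𝓘(ℝ, ℝ) I k t (1 : ℝ))) hF
  have hφ : MDifferentiableAt I I (fun z : G => (h t)⁻¹ * (z * k t)) 1 :=
    (contMDiff_const.mul (contMDiff_id.mul contMDiff_const)).mdifferentiableAt (WithTop.coe_ne_zero.mpr ENat.top_ne_zero)
  have hinva : MDifferentiableAt I I (fun z : G => z⁻¹) (1 : G) :=
    (contMDiff_inv I (⊤ : ℕ∞)).mdifferentiable (by simp) 1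
  have h1a : MDifferentiableAt I I (fun z : G => z⁻¹ * k t) (h t) :=
    (contMDiff_id.inv.mul contMDiff_const).mdifferentiableAt (WithTop.coe_ne_zero.mpr ENat.top_ne_zero)
  have T1 : mfderiv I I (fun z : G => z⁻¹ * k t) (h t) (mfderiv I I (· * h t) 1 (η t))
      = mfderiv I I ((fun z : G => z⁻¹ * k t) ∘ (· * h t)) 1 (η t) :=
    (mfderiv_comp_apply_of_eq (I := I) (I' := I) (I'' := I) (x := (1 : G)) (y := h t)
      h1a mdifferentiableAt_mul_right (one_mul (h t)) (η t)).symm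
  have T2 : mfderiv I I (fun z : G => (h t)⁻¹ * z) (k t) (mfderiv I I (· * k t) 1 (η t))
      = mfderiv I I ((fun z : G => (h t)⁻¹ * z) ∘ (· * k t)) 1 (η t) :=
    (mfderiv_comp_apply_of_eq (I := I) (I' := I) (I'' := I) (x := (1 : G)) (y := k t)
      mdifferentiableAt_mul_left mdifferentiableAt_mul_right (one_mul (k t)) (η t)).symm
  have hfun1 : ((fun z : G => z⁻¹ * k t) ∘ (· * h t))
      = ((fun z : G => (h t)⁻¹ * (z * k t)) ∘ (fun z : G => z⁻¹)) :=
    funext fun z => by simp [Function.comp, mul_inv_rev, mul_assoc]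
  have hfun2 : ((fun z : G => (h t)⁻¹ * z) ∘ (· * k t))
      = (fun z : G => (h t)⁻¹ * (z * k t)) := rfl
  have T1' : mfderiv I I ((fun z : G => (h t)⁻¹ * (z * k t)) ∘ (fun z : G => z⁻¹)) 1 (η t)
      = mfderiv I I (fun z : G => (h t)⁻¹ * (z * k t)) 1
          (mfderiv I I (fun z : G => z⁻¹) 1 (η t)) :=
    mfderiv_comp_apply_of_eq (I := I) (I' := I) (I'' := I) (x := (1 : G)) (y := (1 : G))
      hφ hinva inv_one (η t)
  have T1'' : mfderiv I I (fun z : G => (h t)⁻¹ * (z * k t)) 1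
        (mfderiv I I (fun z : G => z⁻¹) 1 (η t))
      = - mfderiv I I (fun z : G => (h t)⁻¹ * (z * k t)) 1 (η t) := by
    rw [congrArg (mfderiv I I (fun z : G => (h t)⁻¹ * (z * k t)) 1)
      (mfderiv_inv_one_apply (η t))]
    exact map_neg _ _
  rw [hstep1, hstep2]
  refine hstep3.trans ?_
  simp only
  rw [hh t, hk t, T1, T2, hfun1, hfun2, T1', T1'']
  exact neg_add_cancel _

/-- Developments of a given curve of tangent vectors are unique. -/
theorem isDevelopment_unique {η : ℝ → TangentSpace I (1 : G)} {h k : ℝ → G}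
    (hh : IsDevelopment I η h) (hk : IsDevelopment I η k) (t : ℝ) : h t = k t := by
  have hder : ∀ s, mfderiv 𝓘(ℝ, ℝ) I (fun s => (h s)⁻¹ * k s) s = 0 := by
    refine mfderiv_inv_mul_eq_zero (η := η) hh.1 hk.1 (fun s => ?_) (fun s => ?_)
    · rw [curveLogDeriv_spec h s, hh.2.2 s]
    · rw [curveLogDeriv_spec k s, hk.2.2 s]
  have hsmooth : ContMDiff 𝓘(ℝ, ℝ) I (⊤ : ℕ∞) (fun s => (h s)⁻¹ * k s) := hh.1.inv.mul hk.1
  have hconst := constant_of_mfderiv_zero hsmooth hder t 0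
  rw [hh.2.1, hk.2.1, mul_one] at hconst
  have : (h t)⁻¹ * k t = 1 := by rw [hconst, inv_one]
  symm
  rwa [inv_mul_eq_one, eq_comm] at this

end AuxLemmas

section HomAux

variable {E₁ : Type*} [NormedAddCommGroup E₁] [NormedSpace ℝ E₁]
    {H₁ : Type*} [TopologicalSpace H₁] {I₁ : ModelWithCorners ℝ E₁ H₁}
    {G₁ : Type*} [TopologicalSpace G₁] [ChartedSpace H₁ G₁] [Group G₁] [LieGroup I₁ (⊤ : ℕ∞) G₁]
    {E₂ : Type*} [NormedAddCommGroup E₂] [NormedSpace ℝ E₂]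
    {H₂ : Type*} [TopologicalSpace H₂] {I₂ : ModelWithCorners ℝ E₂ H₂}
    {G₂ : Type*} [TopologicalSpace G₂] [ChartedSpace H₂ G₂] [Group G₂] [LieGroup I₂ (⊤ : ℕ∞) G₂]

theorem curveLogDeriv_comp_hom (Λ : G₁ →* G₂) (hΛ : ContMDiff I₁ I₂ (⊤ : ℕ∞) Λ)
    (g : ℝ → G₁) (hg : ContMDiff 𝓘(ℝ, ℝ) I₁ (⊤ : ℕ∞) g) (t : ℝ) :
    curveLogDeriv I₂ (fun s => Λ (g s)) t
      = mfderiv I₁ I₂ Λ 1 (curveLogDeriv I₁ g t) := by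
  have hΛa : ∀ x : G₁, MDifferentiableAt I₁ I₂ Λ x := fun x => hΛ.mdifferentiableAt (by simp)
  have hga : MDifferentiableAt 𝓘(ℝ, ℝ) I₁ g t := hg.mdifferentiableAt (by simp)
  have h1 : mfderiv 𝓘(ℝ, ℝ) I₂ (fun s => Λ (g s)) t (1 : ℝ)
      = mfderiv I₁ I₂ Λ (g t) (mfderiv 𝓘(ℝ, ℝ) I₁ g t (1 : ℝ)) := by
    rw [show (fun s => Λ (g s)) = (⇑Λ ∘ g) from rfl]
    exact mfderiv_comp_apply t (hΛa _) hga (1 : ℝ)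
  have h2 : ∀ w : TangentSpace I₁ (g t),
      mfderiv I₂ I₂ (fun z : G₂ => z * (Λ (g t))⁻¹) (Λ (g t)) (mfderiv I₁ I₂ Λ (g t) w)
        = mfderiv I₁ I₂ ((fun z : G₂ => z * (Λ (g t))⁻¹) ∘ ⇑Λ) (g t) w := fun w =>
    (mfderiv_comp_apply (x := g t) (mdifferentiableAt_mul_right) (hΛa (g t)) w).symm
  have h3 : ((fun z : G₂ => z * (Λ (g t))⁻¹) ∘ ⇑Λ) = ⇑Λ ∘ (fun z : G₁ => z * (g t)⁻¹) :=
    funext fun z => by simp [Function.comp, ← map_inv, ← map_mul]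
  have h4 : ∀ w : TangentSpace I₁ (g t),
      mfderiv I₁ I₂ (⇑Λ ∘ (fun z : G₁ => z * (g t)⁻¹)) (g t) w
        = mfderiv I₁ I₂ Λ 1 (mfderiv I₁ I₁ (fun z : G₁ => z * (g t)⁻¹) (g t) w) := fun w =>
    mfderiv_comp_apply_of_eq (I := I₁) (I' := I₁) (I'' := I₂) (x := g t) (y := (1 : G₁))
      (hΛa 1) (mdifferentiableAt_mul_right) (mul_inv_cancel (g t)) w
  show mfderiv I₂ I₂ (fun h : G₂ => h * (Λ (g t))⁻¹) (Λ (g t))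
      (mfderiv 𝓘(ℝ, ℝ) I₂ (fun s => Λ (g s)) t (1 : ℝ)) = _
  rw [h1, h2, h3, h4]
  rfl

end HomAux

/-- A smooth group homomorphism `Λ : G₁ → G₂` with differential `λ := d Λ₁` at the identity
maps developments to developments: `Λ ∘ g` is the development of `λ ∘ ξ`, i.e.
`∫₀ᵗ (λ ∘ ξ) = Λ (∫₀ᵗ ξ)` for all `t`. -/
theorem development_homomorphism
    {E₁ : Type*} [NormedAddCommGroup E₁] [NormedSpace ℝ E₁]
    {H₁ : Type*} [TopologicalSpace H₁] (I₁ : ModelWithCorners ℝ E₁ H₁)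
    {G₁ : Type*} [TopologicalSpace G₁] [ChartedSpace H₁ G₁] [Group G₁] [LieGroup I₁ (⊤ : ℕ∞) G₁]
    {E₂ : Type*} [NormedAddCommGroup E₂] [NormedSpace ℝ E₂]
    {H₂ : Type*} [TopologicalSpace H₂] (I₂ : ModelWithCorners ℝ E₂ H₂)
    {G₂ : Type*} [TopologicalSpace G₂] [ChartedSpace H₂ G₂] [Group G₂] [LieGroup I₂ (⊤ : ℕ∞) G₂]
    (Λ : G₁ →* G₂) (hΛ : ContMDiff I₁ I₂ (⊤ : ℕ∞) Λ)
    (ξ : ℝ → TangentSpace I₁ (1 : G₁))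
    (hξ : ContMDiff 𝓘(ℝ, ℝ) 𝓘(ℝ, E₁) (⊤ : ℕ∞) (fun t => show E₁ from ξ t))
    (g : ℝ → G₁) (hg : IsDevelopment I₁ ξ g) :
    IsDevelopment I₂ (fun t => mfderiv I₁ I₂ Λ (1 : G₁) (ξ t)) (fun t => Λ (g t)) ∧
      ∀ h : ℝ → G₂, IsDevelopment I₂ (fun t => mfderiv I₁ I₂ Λ (1 : G₁) (ξ t)) h →
        ∀ t : ℝ, h t = Λ (g t) := by
  have hk : IsDevelopment I₂ (fun t => mfderiv I₁ I₂ Λ 1 (ξ t)) (fun t => Λ (g t)) := by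
    refine ⟨hΛ.comp hg.1, ?_, fun t => ?_⟩
    · show Λ (g 0) = 1
      rw [hg.2.1, map_one]
    · rw [curveLogDeriv_comp_hom Λ hΛ g hg.1 t, hg.2.2 t]
  exact ⟨hk, fun h hh t => isDevelopment_unique hh hk t⟩
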